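/- Let φ : (0,∞) → (0,∞) be C¹ with φ(t)t²/Φ(t) ≤ m for all t > 0 (Φ(t) = ∫₀^{|t|}φ(s)s ds), and suppose t ↦ φ(t)/t^{m−2} is nonincreasing on (0,∞). Then the function P(s) = Φ(s) − (1/m)φ(s)s² is nondecreasing on [0,∞) and P(s) ≥ 0 for all s ≥ 0. -/

import Mathlib

open Real MeasureTheory

theorem stmt_8 (φ Φ : ℝ → ℝ) (m : ℝ)
    (hφC1 : ContDiffOn ℝ 1 φ (Set.Ioi 0))
    (hφpos : ∀ t > (0:ℝ), 0 < φ t)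
    (hΦ : ∀ t : ℝ, Φ t = ∫ s in (0:ℝ)..|t|, φ s * s)
    (hm : 1 < m)
    (hbound : ∀ t > (0:ℝ), φ t * t ^ 2 ≤ m * Φ t)
    (hdec : AntitoneOn (fun t => φ t / t ^ (m - 2)) (Set.Ioi 0)) :
    MonotoneOn (fun s => Φ s - (1 / m) * φ s * s ^ 2) (Set.Ici 0) ∧
    ∀ s : ℝ, 0 ≤ s → 0 ≤ Φ s - (1 / m) * φ s * s ^ 2 := by
  have hm0 : (0:ℝ) < m := lt_trans one_pos hm
  have hΦ0 : Φ 0 = 0 := by simp [hΦ]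
  have hnonneg : ∀ s : ℝ, 0 ≤ s → 0 ≤ Φ s - (1 / m) * φ s * s ^ 2 := by
    intro s hs
    rcases eq_or_lt_of_le hs with h | h
    · simp [← h, hΦ0]
    · have h1 := hbound s h
      have h2 : (1/m) * (φ s * s^2) ≤ (1/m) * (m * Φ s) :=
        mul_le_mul_of_nonneg_left h1 (by positivity)
      have h3 : (1/m) * (m * Φ s) = Φ s := by field_simp
      nlinarith
  refine ⟨?_, hnonneg⟩
  have hint : ∀ b > (0:ℝ), IntervalIntegrable (fun s => φ s * s) volume 0 b := by
    intro b hb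
    by_contra hni
    have h0 : Φ b = 0 := by
      rw [hΦ, abs_of_pos hb, intervalIntegral.integral_undef hni]
    have h1 := hbound b hb
    rw [h0] at h1
    nlinarith [mul_pos (hφpos b hb) (pow_pos hb 2)]
  intro a ha b hb hab
  simp only [Set.mem_Ici] at ha hb
  rcases eq_or_lt_of_le ha with h0 | ha'
  · subst h0
    have h := hnonneg b hb
    simp only [hΦ0]
    nlinarith
  have hb' : 0 < b := lt_of_lt_of_le ha' hab
  -- continuity of φ on (0,∞)
  have hcont : ContinuousOn φ (Set.Ioi 0) := hφC1.continuousOn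
  have hsub : Set.uIcc a b ⊆ Set.Ioi 0 := by
    rw [Set.uIcc_of_le hab]
    intro x hx; exact lt_of_lt_of_le ha' hx.1
  have hintab : IntervalIntegrable (fun s => φ s * s) volume a b :=
    ((hcont.mono hsub).mul continuousOn_id).intervalIntegrable
  -- the comparison function
  set C : ℝ := φ b / b ^ (m - 2) with hC
  have hCint : IntervalIntegrable (fun t => C * t ^ (m - 1)) volume a b := by
    apply ContinuousOn.intervalIntegrable
    apply continuousOn_const.mul
    exact continuousOn_id.rpow_const (fun x hx => Or.inl (ne_of_gt (lt_of_lt_of_le ha' (by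
      rw [Set.uIcc_of_le hab] at hx; exact hx.1))))
  have hG : ∀ t ∈ Set.uIcc a b, C * t ^ (m - 1) ≤ φ t * t := by
    intro t ht
    rw [Set.uIcc_of_le hab] at ht
    have ht0 : 0 < t := lt_of_lt_of_le ha' ht.1
    have h1 : C ≤ φ t / t ^ (m - 2) :=
      hdec (Set.mem_Ioi.mpr ht0) (Set.mem_Ioi.mpr hb') ht.2
    have h2 : t ^ (m - 1) = t ^ (m - 2) * t := by
      rw [show m - 1 = (m - 2) + 1 by ring, Real.rpow_add ht0, Real.rpow_one]
    have hX : t ^ (m - 2) ≠ 0 := ne_of_gt (Real.rpow_pos_of_pos ht0 _)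
    calc C * t ^ (m - 1) ≤ (φ t / t ^ (m - 2)) * t ^ (m - 1) :=
          mul_le_mul_of_nonneg_right h1 (Real.rpow_nonneg ht0.le _)
      _ = φ t * t := by rw [h2]; field_simp
  have hI1 : ∫ t in a..b, C * t ^ (m - 1) ≤ ∫ t in a..b, φ t * t :=
    intervalIntegral.integral_mono_on hab hCint hintab
      (fun x hx => hG x (by rw [Set.uIcc_of_le hab]; exact hx))
  have hI2 : ∫ t in a..b, C * t ^ (m - 1) = C * ((b ^ m - a ^ m) / m) := by
    rw [intervalIntegral.integral_const_mul, integral_rpow (Or.inl (by linarith))]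
    rw [show m - 1 + 1 = m by ring]
  -- powers: for x > 0, x ^ m = x ^ (m-2) * x ^ 2
  have hpow : ∀ x : ℝ, 0 < x → x ^ m = x ^ (m - 2) * x ^ 2 := by
    intro x hx
    have h2 : x ^ (2:ℝ) = x ^ (2:ℕ) := by
      rw [show (2:ℝ) = ((2:ℕ):ℝ) by norm_num, Real.rpow_natCast]
    rw [← h2, ← Real.rpow_add hx]; ring_nf
  have hCb : C * b ^ m = φ b * b ^ 2 := by
    rw [hpow b hb', hC]
    have hX : b ^ (m - 2) ≠ 0 := ne_of_gt (Real.rpow_pos_of_pos hb' _)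
    field_simp
  have hCa : C * a ^ m ≤ φ a * a ^ 2 := by
    have h1 : C ≤ φ a / a ^ (m - 2) :=
      hdec (Set.mem_Ioi.mpr ha') (Set.mem_Ioi.mpr hb') hab
    have h2 : C * a ^ m ≤ (φ a / a ^ (m - 2)) * a ^ m :=
      mul_le_mul_of_nonneg_right h1 (Real.rpow_nonneg ha'.le _)
    have hX : a ^ (m - 2) ≠ 0 := ne_of_gt (Real.rpow_pos_of_pos ha' _)
    have h3 : (φ a / a ^ (m - 2)) * a ^ m = φ a * a ^ 2 := by
      rw [hpow a ha']; field_simp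
    linarith
  -- Φ b - Φ a = ∫ a..b
  have hΦdiff : Φ b - Φ a = ∫ t in a..b, φ t * t := by
    rw [hΦ a, hΦ b, abs_of_pos ha', abs_of_pos hb']
    exact intervalIntegral.integral_interval_sub_left (hint b hb') (hint a ha')
  -- combine
  have hfinal : (1/m) * (φ b * b ^ 2 - φ a * a ^ 2) ≤ Φ b - Φ a := by
    rw [hΦdiff]
    calc (1/m) * (φ b * b ^ 2 - φ a * a ^ 2)
        ≤ (1/m) * (C * b ^ m - C * a ^ m) := by
          apply mul_le_mul_of_nonneg_left _ (by positivity)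
          linarith [hCb, hCa]
      _ = C * ((b ^ m - a ^ m) / m) := by field_simp
      _ = ∫ t in a..b, C * t ^ (m - 1) := hI2.symm
      _ ≤ ∫ t in a..b, φ t * t := hI1
  simp only
  nlinarith [hfinal]
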